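/- arXiv:2202.04033 — 2 statements merged into one kernel-verified Lean document; each statement's English description precedes it below -/
import Mathlib

section
/- Let Ω ⊆ ℝ^d be a connected open set (a domain) and H an open affine half-space. Then P_H(Ω) ∩ H = (Ω ∪ σ_H(Ω)) ∩ H is open and connected. -/
open Set Metric MeasureTheory
open scoped ENNReal

noncomputable def sigmaH {d : ℕ} (h : EuclideanSpace ℝ (Fin d)) (c : ℝ)
    (x : EuclideanSpace ℝ (Fin d)) : EuclideanSpace ℝ (Fin d) :=
  x + (2 * (c - (inner ℝ x h : ℝ))) • h

def halfSp {d : ℕ} (h : EuclideanSpace ℝ (Fin d)) (c : ℝ) :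
    Set (EuclideanSpace ℝ (Fin d)) :=
  {x | (inner ℝ x h : ℝ) < c}

noncomputable def polz {d : ℕ} (h : EuclideanSpace ℝ (Fin d)) (c : ℝ)
    (A : Set (EuclideanSpace ℝ (Fin d))) : Set (EuclideanSpace ℝ (Fin d)) :=
  ((A ∪ sigmaH h c '' A) ∩ halfSp h c) ∪ (A ∩ sigmaH h c '' A)

noncomputable def dpolz {d : ℕ} (h : EuclideanSpace ℝ (Fin d)) (c : ℝ)
    (A : Set (EuclideanSpace ℝ (Fin d))) : Set (EuclideanSpace ℝ (Fin d)) :=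
  ((A ∪ sigmaH h c '' A) ∩ (halfSp h c)ᶜ) ∪ (A ∩ sigmaH h c '' A)

section Aux

variable {d : ℕ} (h : EuclideanSpace ℝ (Fin d)) (c : ℝ)

lemma aux_inner_sigmaH (hh : ‖h‖ = 1) (x : EuclideanSpace ℝ (Fin d)) :
    (inner ℝ (sigmaH h c x) h : ℝ) = 2 * c - inner ℝ x h := by
  have h1 : (inner ℝ h h : ℝ) = 1 := by
    rw [real_inner_self_eq_norm_sq, hh]; norm_num
  simp only [sigmaH, inner_add_left, real_inner_smul_left, h1]; ring

lemma aux_sigmaH_invol (hh : ‖h‖ = 1) (x : EuclideanSpace ℝ (Fin d)) :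
    sigmaH h c (sigmaH h c x) = x := by
  conv_lhs => rw [sigmaH, aux_inner_sigmaH h c hh]
  rw [sigmaH]
  module

lemma aux_inner_cont : Continuous fun x : EuclideanSpace ℝ (Fin d) => (inner ℝ x h : ℝ) :=
  continuous_id.inner continuous_const

lemma aux_sigmaH_cont : Continuous (sigmaH h c) := by
  unfold sigmaH
  exact continuous_id.add
    ((continuous_const.mul (continuous_const.sub (aux_inner_cont h))).smul continuous_const)

lemma aux_halfSp_open : IsOpen (halfSp h c) :=
  isOpen_lt (aux_inner_cont h) continuous_const

lemma aux_halfSp_convex : Convex ℝ (halfSp h c) :=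
  convex_halfSpace_lt
    ⟨fun a b => inner_add_left a b h, fun r x => real_inner_smul_left x h r⟩ c

lemma aux_shift_mem_ball (hh : ‖h‖ = 1) (x : EuclideanSpace ℝ (Fin d)) {ε : ℝ}
    (hε : 0 < ε) : x - (ε / 2) • h ∈ ball x ε := by
  rw [mem_ball, dist_eq_norm, sub_sub_cancel_left, norm_neg, norm_smul,
    Real.norm_eq_abs, hh, mul_one, abs_of_pos (half_pos hε)]
  exact half_lt_self hε

lemma aux_shift_inner (hh : ‖h‖ = 1) (x : EuclideanSpace ℝ (Fin d)) (t : ℝ) :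
    (inner ℝ (x - t • h) h : ℝ) = inner ℝ x h - t := by
  have h1 : (inner ℝ h h : ℝ) = 1 := by
    rw [real_inner_self_eq_norm_sq, hh]; norm_num
  rw [inner_sub_left, real_inner_smul_left, h1, mul_one]

lemma aux_star_open (u A : Set (EuclideanSpace ℝ (Fin d))) :
    IsOpen {x | ∃ N, IsOpen N ∧ x ∈ N ∧ (N ∩ A).Nonempty ∧ N ∩ A ⊆ u} := by
  rw [isOpen_iff_forall_mem_open]
  rintro x ⟨N, hNo, hxN, hNne, hNsub⟩
  exact ⟨N, fun y hy => ⟨N, hNo, hy, hNne, hNsub⟩, hNo, hxN⟩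

end Aux

/-- The polarization of a domain intersected with the half-space is a domain. -/
theorem stmt9 {d : ℕ} (h : EuclideanSpace ℝ (Fin d)) (c : ℝ) (hh : ‖h‖ = 1)
    (Ω : Set (EuclideanSpace ℝ (Fin d))) (hΩo : IsOpen Ω) (hΩc : IsConnected Ω) :
    polz h c Ω ∩ halfSp h c = (Ω ∪ sigmaH h c '' Ω) ∩ halfSp h c ∧
    IsOpen (polz h c Ω ∩ halfSp h c) ∧
    IsConnected (polz h c Ω ∩ halfSp h c) := by
  have heq : polz h c Ω ∩ halfSp h c = (Ω ∪ sigmaH h c '' Ω) ∩ halfSp h c := by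
    ext x; simp only [polz, mem_inter_iff, mem_union]; tauto
  set A : Set (EuclideanSpace ℝ (Fin d)) := (Ω ∪ sigmaH h c '' Ω) ∩ halfSp h c with hA
  -- image of Ω under σ is open
  have himg : sigmaH h c '' Ω = sigmaH h c ⁻¹' Ω :=
    congrFun (Set.image_eq_preimage_of_inverse (aux_sigmaH_invol h c hh) (aux_sigmaH_invol h c hh)) Ω
  have hσΩo : IsOpen (sigmaH h c '' Ω) := by
    rw [himg]; exact hΩo.preimage (aux_sigmaH_cont h c)
  have hAo : IsOpen A := (hΩo.union hσΩo).inter (aux_halfSp_open h c)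
  -- membership helpers
  have hmemΩ : ∀ x ∈ Ω, (inner ℝ x h : ℝ) < c → x ∈ A := fun x hx hxc => ⟨Or.inl hx, hxc⟩
  have hmemσ : ∀ y ∈ Ω, c < (inner ℝ y h : ℝ) → sigmaH h c y ∈ A := by
    intro y hy hyc
    refine ⟨Or.inr (mem_image_of_mem _ hy), ?_⟩
    show (inner ℝ (sigmaH h c y) h : ℝ) < c
    rw [aux_inner_sigmaH h c hh]; linarith
  -- near a point of Ω on the hyperplane, there are points of A
  have hball : ∀ x ∈ Ω, ∀ W : Set (EuclideanSpace ℝ (Fin d)), IsOpen W → x ∈ W →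
      ∃ ε > 0, ball x ε ⊆ Ω ∩ W :=
    fun x hx W hW hxW => Metric.isOpen_iff.1 (hΩo.inter hW) x ⟨hx, hxW⟩
  have hzpt : ∀ (x : EuclideanSpace ℝ (Fin d)), (inner ℝ x h : ℝ) = c → ∀ ε > (0:ℝ),
      x - (ε / 2) • h ∈ ball x ε ∩ halfSp h c := by
    intro x hxc ε hε
    refine ⟨aux_shift_mem_ball h hh x hε, ?_⟩
    show (inner ℝ (x - (ε/2) • h) h : ℝ) < c
    rw [aux_shift_inner h hh x, hxc]; linarith
  -- A is nonempty
  have hAne : A.Nonempty := by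
    obtain ⟨a, ha⟩ := hΩc.nonempty
    rcases lt_trichotomy (inner ℝ a h : ℝ) c with hlt | heq' | hgt
    · exact ⟨a, hmemΩ a ha hlt⟩
    · obtain ⟨ε, hε, hsub⟩ := hball a ha univ isOpen_univ (mem_univ a)
      obtain ⟨hz1, hz2⟩ := hzpt a heq' ε hε
      exact ⟨a - (ε/2) • h, hmemΩ _ (hsub hz1).1 hz2⟩
    · exact ⟨sigmaH h c a, hmemσ a ha hgt⟩
  -- the folding map π
  set π : EuclideanSpace ℝ (Fin d) → EuclideanSpace ℝ (Fin d) :=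
    fun x => if (inner ℝ x h : ℝ) ≤ c then x else sigmaH h c x with hπ
  have hπcont : Continuous π := by
    refine Continuous.if_le continuous_id (aux_sigmaH_cont h c) (aux_inner_cont h)
      continuous_const ?_
    intro x hx
    show x = sigmaH h c x
    rw [sigmaH, hx, sub_self, mul_zero, zero_smul, add_zero]
  set s : Set (EuclideanSpace ℝ (Fin d)) := π '' Ω with hs
  have hscon : IsPreconnected s := (hΩc.image π hπcont.continuousOn).isPreconnected
  have hAs : A ⊆ s := by
    rintro x ⟨hx1, hx2⟩
    have hx2' : (inner ℝ x h : ℝ) < c := hx2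
    rcases hx1 with hxΩ | ⟨y, hy, rfl⟩
    · exact ⟨x, hxΩ, if_pos hx2'.le⟩
    · have hyc : c < (inner ℝ y h : ℝ) := by
        have := aux_inner_sigmaH h c hh y
        rw [this] at hx2'; linarith
      exact ⟨y, hy, if_neg (not_le.2 hyc)⟩
  -- preconnectedness of A
  have hAcon : IsPreconnected A := by
    rintro u v hu hv hcov ⟨a, haA, hau⟩ ⟨b, hbA, hbv⟩
    by_contra hne
    rw [Set.not_nonempty_iff_eq_empty] at hne
    have hdisj : ∀ x, x ∈ A → x ∈ u → x ∈ v → False := by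
      intro x h1 h2 h3
      have : x ∈ A ∩ (u ∩ v) := ⟨h1, h2, h3⟩
      rw [hne] at this; exact this
    set U : Set (EuclideanSpace ℝ (Fin d)) :=
      {x | ∃ N, IsOpen N ∧ x ∈ N ∧ (N ∩ A).Nonempty ∧ N ∩ A ⊆ u} with hU
    set V : Set (EuclideanSpace ℝ (Fin d)) :=
      {x | ∃ N, IsOpen N ∧ x ∈ N ∧ (N ∩ A).Nonempty ∧ N ∩ A ⊆ v} with hV
    have hmemU : ∀ x ∈ A, x ∈ u → x ∈ U := by
      intro x hx hxu
      exact ⟨u ∩ A, hu.inter hAo, ⟨hxu, hx⟩, ⟨x, ⟨hxu, hx⟩, hx⟩, fun y hy => hy.1.1⟩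
    have hmemV : ∀ x ∈ A, x ∈ v → x ∈ V := by
      intro x hx hxv
      exact ⟨v ∩ A, hv.inter hAo, ⟨hxv, hx⟩, ⟨x, ⟨hxv, hx⟩, hx⟩, fun y hy => hy.1.1⟩
    -- boundary case: points of Ω on the hyperplane
    have hbdry : ∀ x ∈ Ω, (inner ℝ x h : ℝ) = c →
        ∀ W : Set (EuclideanSpace ℝ (Fin d)), IsOpen W → x ∈ W →
        ∃ N, IsOpen N ∧ x ∈ N ∧ N ⊆ W ∧ (N ∩ A).Nonempty ∧
          (N ∩ A ⊆ u ∨ N ∩ A ⊆ v) := by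
      intro x hxΩ hxc W hW hxW
      obtain ⟨ε, hε, hsub⟩ := hball x hxΩ W hW hxW
      set B := ball x ε with hB
      have hBH_sub_A : B ∩ halfSp h c ⊆ A := by
        rintro z ⟨hz1, hz2⟩
        exact hmemΩ z (hsub hz1).1 hz2
      have hBA : B ∩ A = B ∩ halfSp h c := by
        apply Subset.antisymm
        · rintro z ⟨hz1, hz2⟩; exact ⟨hz1, hz2.2⟩
        · rintro z hz; exact ⟨hz.1, hBH_sub_A hz⟩
      have hBHne : (B ∩ halfSp h c).Nonempty := ⟨_, hzpt x hxc ε hε⟩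
      have hBHcon : IsPreconnected (B ∩ halfSp h c) :=
        ((convex_ball x ε).inter (aux_halfSp_convex h c)).isPreconnected
      have hBHcov : B ∩ halfSp h c ⊆ u ∪ v := fun z hz => hcov (hBH_sub_A hz)
      have honeside : B ∩ halfSp h c ⊆ u ∨ B ∩ halfSp h c ⊆ v := by
        by_contra hcon
        push_neg at hcon
        obtain ⟨hnu, hnv⟩ := hcon
        have hvne : (B ∩ halfSp h c ∩ v).Nonempty := by
          obtain ⟨z, hz, hzu⟩ := not_subset.1 hnu
          rcases hBHcov hz with h' | h'
          · exact absurd h' hzu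
          · exact ⟨z, hz, h'⟩
        have hune : (B ∩ halfSp h c ∩ u).Nonempty := by
          obtain ⟨z, hz, hzv⟩ := not_subset.1 hnv
          rcases hBHcov hz with h' | h'
          · exact ⟨z, hz, h'⟩
          · exact absurd h' hzv
        obtain ⟨z, hz, hzu, hzv⟩ := hBHcon u v hu hv hBHcov hune hvne
        exact hdisj z (hBH_sub_A hz) hzu hzv
      refine ⟨B, isOpen_ball, mem_ball_self hε, fun z hz => (hsub hz).2, ?_, ?_⟩
      · rw [hBA]; exact hBHne
      · rw [hBA]; exact honeside
    -- s is covered by U and V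
    have hcovUV : s ⊆ U ∪ V := by
      rintro x ⟨y, hyΩ, rfl⟩
      rcases le_or_gt (inner ℝ y h : ℝ) c with hle | hgt
      · have hπy : π y = y := if_pos hle
        rw [hπy]
        rcases lt_or_eq_of_le hle with hlt | heqc
        · have hyA : y ∈ A := hmemΩ y hyΩ hlt
          rcases hcov hyA with h' | h'
          · exact Or.inl (hmemU y hyA h')
          · exact Or.inr (hmemV y hyA h')
        · obtain ⟨N, hNo, hxN, _, hNne, hNor⟩ :=
            hbdry y hyΩ heqc univ isOpen_univ (mem_univ y)
          rcases hNor with h' | h'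
          · exact Or.inl ⟨N, hNo, hxN, hNne, h'⟩
          · exact Or.inr ⟨N, hNo, hxN, hNne, h'⟩
      · have hπy : π y = sigmaH h c y := if_neg (not_le.2 hgt)
        rw [hπy]
        have hyA : sigmaH h c y ∈ A := hmemσ y hyΩ hgt
        rcases hcov hyA with h' | h'
        · exact Or.inl (hmemU _ hyA h')
        · exact Or.inr (hmemV _ hyA h')
    have hsU : (s ∩ U).Nonempty := ⟨a, hAs haA, hmemU a haA hau⟩
    have hsV : (s ∩ V).Nonempty := ⟨b, hAs hbA, hmemV b hbA hbv⟩
    obtain ⟨x, hxs, hxU, hxV⟩ :=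
      hscon U V (aux_star_open u A) (aux_star_open v A) hcovUV hsU hsV
    obtain ⟨Nu, hNuo, hxNu, hNune, hNuu⟩ := hxU
    obtain ⟨Nv, hNvo, hxNv, hNvne, hNvv⟩ := hxV
    by_cases hxA : x ∈ A
    · exact hdisj x hxA (hNuu ⟨hxNu, hxA⟩) (hNvv ⟨hxNv, hxA⟩)
    · -- x is in Ω on the hyperplane
      obtain ⟨y, hyΩ, rfl⟩ := hxs
      rcases le_or_gt (inner ℝ y h : ℝ) c with hle | hgt
      · have hπy : π y = y := if_pos hle
        rw [hπy] at hxA hxNu hxNv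
        rcases lt_or_eq_of_le hle with hlt | heqc
        · exact hxA (hmemΩ y hyΩ hlt)
        · obtain ⟨ε, hε, hsub⟩ :=
            hball y hyΩ (Nu ∩ Nv) (hNuo.inter hNvo) ⟨hxNu, hxNv⟩
          obtain ⟨hz1, hz2⟩ := hzpt y heqc ε hε
          set z := y - (ε/2) • h with hzdef
          have hzΩ : z ∈ Ω := (hsub hz1).1
          have hzNuv : z ∈ Nu ∩ Nv := (hsub hz1).2
          have hzA : z ∈ A := hmemΩ z hzΩ hz2
          exact hdisj z hzA (hNuu ⟨hzNuv.1, hzA⟩) (hNvv ⟨hzNuv.2, hzA⟩)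
      · have hπy : π y = sigmaH h c y := if_neg (not_le.2 hgt)
        rw [hπy] at hxA
        exact hxA (hmemσ y hyΩ hgt)
  exact ⟨heq, heq ▸ hAo, heq ▸ ⟨hAne, hAcon⟩⟩
end

section
/- Let A ⊆ ℝ^d be open and C ⊂ A closed in ℝ^d, and H an open affine half-space with σ_H(C) ⊂ A. Then P_H(A \ C) = P_H(A) \ P^H(C). -/
open Set Metric MeasureTheory
open scoped ENNReal

lemma sigmaH_invol {d : ℕ} (h : EuclideanSpace ℝ (Fin d)) (c : ℝ) (hh : ‖h‖ = 1)
    (x : EuclideanSpace ℝ (Fin d)) : sigmaH h c (sigmaH h c x) = x := by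
  have hinner : (inner ℝ (sigmaH h c x) h : ℝ) = 2 * c - (inner ℝ x h : ℝ) := by
    rw [show sigmaH h c x = x + (2 * (c - (inner ℝ x h : ℝ))) • h from rfl,
      inner_add_left, real_inner_smul_left, real_inner_self_eq_norm_sq, hh]
    ring
  rw [show sigmaH h c (sigmaH h c x)
      = sigmaH h c x + (2 * (c - (inner ℝ (sigmaH h c x) h : ℝ))) • h from rfl, hinner,
    show sigmaH h c x = x + (2 * (c - (inner ℝ x h : ℝ))) • h from rfl,
    add_assoc, ← add_smul,
    show 2 * (c - (inner ℝ x h : ℝ)) + 2 * (c - (2 * c - (inner ℝ x h : ℝ))) = 0 by ring,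
    zero_smul, add_zero]

lemma mem_image_sigmaH {d : ℕ} (h : EuclideanSpace ℝ (Fin d)) (c : ℝ) (hh : ‖h‖ = 1)
    (S : Set (EuclideanSpace ℝ (Fin d))) (x : EuclideanSpace ℝ (Fin d)) :
    x ∈ sigmaH h c '' S ↔ sigmaH h c x ∈ S := by
  constructor
  · rintro ⟨y, hy, rfl⟩; rwa [sigmaH_invol h c hh]
  · intro hx; exact ⟨sigmaH h c x, hx, sigmaH_invol h c hh x⟩

/-- Polarization of a punctured domain. -/
theorem stmt12 {d : ℕ} (h : EuclideanSpace ℝ (Fin d)) (c : ℝ) (hh : ‖h‖ = 1)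
    (A C : Set (EuclideanSpace ℝ (Fin d))) (hA : IsOpen A) (hC : IsClosed C)
    (hCA : C ⊆ A) (hσ : sigmaH h c '' C ⊆ A) :
    polz h c (A \ C) = polz h c A \ dpolz h c C := by
  ext x
  have h1 : x ∈ C → x ∈ A := fun hx => hCA hx
  have h2 : sigmaH h c x ∈ C → sigmaH h c x ∈ A := fun hx => hCA hx
  have h3 : x ∈ C → sigmaH h c x ∈ A := fun hx => hσ ⟨x, hx, rfl⟩
  have h4 : sigmaH h c x ∈ C → x ∈ A := fun hx => by
    have := hσ ⟨sigmaH h c x, hx, rfl⟩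
    rwa [sigmaH_invol h c hh] at this
  simp only [polz, dpolz, mem_union, mem_inter_iff, mem_diff, mem_compl_iff,
    mem_image_sigmaH h c hh]
  clear hA hC hCA hσ
  generalize (x ∈ A) = a at *
  generalize (sigmaH h c x ∈ A) = a' at *
  generalize (x ∈ C) = cc at *
  generalize (sigmaH h c x ∈ C) = c' at *
  generalize (x ∈ halfSp h c) = hs
  by_cases a <;> by_cases a' <;> by_cases cc <;> by_cases c' <;> by_cases hs <;> simp_all
end
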